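/- arXiv:2508.05356 — 4 statements merged into one kernel-verified Lean document; each statement's English description precedes it below -/
import Mathlib

section
/- Let n be a finite index type, A : Matrix n n ℂ a square complex matrix, and v : n → ℂ a vector. Then Matrix.exp ((t : ℂ) • A) *ᵥ v = v holds for every real number t if and only if A *ᵥ v = 0. (This is the equivalence between invariance under all finite gauge transformations e^{tA} and the infinitesimal Gauss-law constraint A v = 0.) -/
open NormedSpace Matrix

attribute [local instance] Matrix.linftyOpNormedRing Matrix.linftyOpNormedAlgebra

/-- A vector `v` is fixed by every finite gauge transformation `exp (t • A)` (for all real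
`t`) if and only if it satisfies the infinitesimal Gauss-law constraint `A v = 0`. -/
theorem exp_smul_mulVec_eq_self_iff_mulVec_eq_zero
    {n : Type*} [Fintype n] [DecidableEq n] (A : Matrix n n ℂ) (v : n → ℂ) :
    (∀ t : ℝ, exp ((t : ℂ) • A) *ᵥ v = v) ↔ A *ᵥ v = 0 := by
  -- the continuous linear map `M ↦ M *ᵥ v`
  let L₀ : Matrix n n ℂ →ₗ[ℂ] (n → ℂ) :=
    { toFun := fun M => M *ᵥ v
      map_add' := fun M N => Matrix.add_mulVec M N v
      map_smul' := fun c M => (Matrix.smul_mulVec c M v) }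
  let L : Matrix n n ℂ →L[ℂ] (n → ℂ) := LinearMap.toContinuousLinearMap L₀
  have hL : ∀ M : Matrix n n ℂ, L M = M *ᵥ v := fun _ => rfl
  constructor
  · intro h
    -- differentiate at `t = 0`
    have hd : HasDerivAt (fun z : ℂ => exp (z • A)) (exp ((0:ℂ) • A) * A) 0 :=
      hasDerivAt_exp_smul_const A (0 : ℂ)
    have hd2 : HasDerivAt (fun z : ℂ => L (exp (z • A)))
        (L (exp ((0:ℂ) • A) * A)) 0 := L.hasFDerivAt.comp_hasDerivAt _ hd
    have hd2' : HasDerivAt (fun z : ℂ => L (exp (z • A)))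
        (L (exp ((0:ℂ) • A) * A)) ((0:ℝ) : ℂ) := by simpa using hd2
    have hd3 : HasDerivAt (fun t : ℝ => L (exp ((t : ℂ) • A)))
        (L (exp ((0:ℂ) • A) * A)) 0 := by
      have h1 := (hd2'.hasFDerivAt.restrictScalars ℝ).comp_hasDerivAt (0 : ℝ)
        (Complex.ofRealCLM.hasDerivAt (x := (0 : ℝ)))
      simp at h1 ⊢; exact h1
    have hconst : (fun t : ℝ => L (exp ((t : ℂ) • A))) = fun _ : ℝ => v := by
      funext t; rw [hL]; exact h t
    have hzero : HasDerivAt (fun _ : ℝ => v) (0 : n → ℂ) 0 := hasDerivAt_const _ _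
    have := (hconst ▸ hd3).unique hzero
    rw [hL, zero_smul, exp_zero, one_mul] at this
    exact this
  · intro h t
    have hpow : ∀ k : ℕ, 1 ≤ k → ((t : ℂ) • A) ^ k *ᵥ v = 0 := by
      intro k hk
      obtain ⟨m, rfl⟩ := Nat.exists_eq_add_of_le hk
      rw [add_comm, smul_pow, smul_mulVec, pow_succ A m]
      rw [← Matrix.mulVec_mulVec, h, Matrix.mulVec_zero, smul_zero]
    have hsum := expSeries_summable' (𝕂 := ℂ) ((t : ℂ) • A)
    rw [exp_eq_tsum (𝕂 := ℂ), ← hL, L.map_tsum hsum, tsum_eq_single 0]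
    · simp [hL, L₀]
    · intro k hk
      rw [L.map_smul, hL, hpow k (Nat.one_le_iff_ne_zero.mpr hk), smul_zero]
end

section
/- Let G be a group, set R := MonoidAlgebra ℂ G, let S be a simple R-module that is finite-dimensional as a ℂ-vector space, and let M be any R-module. Consider the ℂ-linear evaluation map ev : S ⊗[ℂ] (S →ₗ[R] M) → M determined by ev(s ⊗ f) = f s. Then ev is injective, and its range, viewed as a ℂ-subspace of M, equals the underlying ℂ-subspace of the S-isotypic component of M. -/
open TensorProduct

/-- The `ℂ`-linear evaluation map `S ⊗[ℂ] (S →ₗ[R] M) → M`, `s ⊗ f ↦ f s`, where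
`R = MonoidAlgebra ℂ G`. -/
noncomputable def isotypicEval (G : Type*) [Group G]
    (S : Type*) [AddCommGroup S] [Module ℂ S]
    [Module (MonoidAlgebra ℂ G) S] [IsScalarTower ℂ (MonoidAlgebra ℂ G) S]
    (M : Type*) [AddCommGroup M] [Module ℂ M]
    [Module (MonoidAlgebra ℂ G) M] [IsScalarTower ℂ (MonoidAlgebra ℂ G) M]
    [SMulCommClass (MonoidAlgebra ℂ G) ℂ M] :
    S ⊗[ℂ] (S →ₗ[MonoidAlgebra ℂ G] M) →ₗ[ℂ] M :=
  TensorProduct.lift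
    (LinearMap.mk₂ ℂ (fun s f => f s)
      (fun s t f => map_add f s t)
      (fun c s f => by
        simp only [← algebraMap_smul (MonoidAlgebra ℂ G) c s]
        rw [map_smul, algebraMap_smul])
      (fun s f g => rfl)
      (fun c s f => rfl))

section Aux

set_option linter.unusedSectionVars false

variable {G : Type*} [Group G]
variable {S : Type*} [AddCommGroup S] [Module ℂ S]
  [Module (MonoidAlgebra ℂ G) S] [IsScalarTower ℂ (MonoidAlgebra ℂ G) S]
variable {M : Type*} [AddCommGroup M] [Module ℂ M]
  [Module (MonoidAlgebra ℂ G) M] [IsScalarTower ℂ (MonoidAlgebra ℂ G) M]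
  [SMulCommClass (MonoidAlgebra ℂ G) ℂ M]

/-- Schur's lemma over `ℂ` for finite-dimensional simple modules: every endomorphism is a
scalar. -/
theorem schurScalar [IsSimpleModule (MonoidAlgebra ℂ G) S] [FiniteDimensional ℂ S]
    (φ : S →ₗ[MonoidAlgebra ℂ G] S) : ∃ c : ℂ, ∀ s : S, φ s = c • s := by
  have : Nontrivial S := IsSimpleModule.nontrivial (MonoidAlgebra ℂ G) S
  haveI : SMulCommClass (MonoidAlgebra ℂ G) ℂ S := SMulCommClass.symm _ _ _
  obtain ⟨c, hc⟩ := Module.End.exists_eigenvalue (φ.restrictScalars ℂ : Module.End ℂ S)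
  obtain ⟨v, hv⟩ := hc.exists_hasEigenvector
  refine ⟨c, fun s => ?_⟩
  set ψ : S →ₗ[MonoidAlgebra ℂ G] S := φ - c • LinearMap.id with hψ
  have hv' : ψ v = 0 := by
    have h1 : φ v = c • v := hv.apply_eq_smul
    simp [hψ, h1]
  have hne : LinearMap.ker ψ ≠ ⊥ := by
    intro h
    exact hv.2 (by simpa [h] using (LinearMap.mem_ker.mpr hv' : v ∈ LinearMap.ker ψ))
  have htop : LinearMap.ker ψ = ⊤ := (eq_bot_or_eq_top _).resolve_left hne
  have : ψ s = 0 := LinearMap.mem_ker.mp (htop ▸ Submodule.mem_top)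
  have := sub_eq_zero.mp (by simpa [hψ] using this)
  simpa using this

/-- A finite power of a simple module is semisimple. -/
theorem semisimplePiFin [IsSimpleModule (MonoidAlgebra ℂ G) S] (m : ℕ) :
    IsSemisimpleModule (MonoidAlgebra ℂ G) (Fin m → S) := by
  classical
  refine isSemisimpleModule_of_isSemisimpleModule_submodule'
    (p := fun i : Fin m =>
      LinearMap.range (LinearMap.single (MonoidAlgebra ℂ G) (fun _ : Fin m => S) i))
    (fun i => ?_) ?_
  · exact IsSemisimpleModule.congr
      (LinearEquiv.ofInjective _ (Pi.single_injective (M := fun _ : Fin m => S) i)).symm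
  · simp_rw [LinearMap.range_eq_map, Submodule.iSup_map_single, Submodule.pi_top]

set_option maxHeartbeats 1000000 in
set_option synthInstance.maxHeartbeats 2000000 in
/-- Key lemma: if `f₁, …, fₙ : S →ₗ[R] M` are `ℂ`-linearly independent, then
`∑ fᵢ (tᵢ) = 0` forces all `tᵢ = 0`. -/
theorem keyIndep [IsSimpleModule (MonoidAlgebra ℂ G) S] [FiniteDimensional ℂ S] (n : ℕ)
    (f : Fin n → (S →ₗ[MonoidAlgebra ℂ G] M)) (hf : LinearIndependent ℂ f)
    (t : Fin n → S) (ht : ∑ i, f i (t i) = 0) : t = 0 := by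
  induction n with
  | zero => funext i; exact i.elim0
  | succ n ih =>
    classical
    set Φ : (Fin (n + 1) → S) →ₗ[MonoidAlgebra ℂ G] M :=
      ∑ i, (f i).comp (LinearMap.proj i) with hΦ
    have hΦapply : ∀ u : Fin (n + 1) → S, Φ u = ∑ i, f i (u i) := by
      intro u
      simp [hΦ, LinearMap.sum_apply]
    have hlast : ∀ u, Φ u = 0 → u (Fin.last n) = 0 := by
      by_contra hcon
      push_neg at hcon
      obtain ⟨u, huK, hune⟩ := hcon
      haveI : IsSemisimpleModule (MonoidAlgebra ℂ G) (Fin (n + 1) → S) := semisimplePiFin _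
      set K := LinearMap.ker Φ with hK
      have huK' : u ∈ K := LinearMap.mem_ker.mpr huK
      set π : K →ₗ[MonoidAlgebra ℂ G] S :=
        (LinearMap.proj (Fin.last n)).comp K.subtype with hπ
      have hπsurj : Function.Surjective π := by
        refine LinearMap.surjective_of_ne_zero (fun h0 => hune ?_)
        simpa [hπ] using DFunLike.congr_fun h0 ⟨u, huK'⟩
      obtain ⟨K'', hcompl⟩ := exists_isCompl (LinearMap.ker π)
      set ρ : K'' →ₗ[MonoidAlgebra ℂ G] S := π.comp K''.subtype with hρ
      have hρbij : Function.Bijective ρ := by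
        constructor
        · intro x y hxy
          have hxy' : π ((x : K) - (y : K)) = 0 := by
            rw [map_sub]
            have hr : ρ x = ρ y := hxy
            have hrx : ρ x = π (x : K) := rfl
            have hry : ρ y = π (y : K) := rfl
            rw [← hrx, ← hry, hr, sub_self]
          have hmem : ((x : K) - (y : K)) ∈ LinearMap.ker π := LinearMap.mem_ker.mpr hxy'
          have hmem2 : ((x : K) - (y : K)) ∈ K'' := K''.sub_mem x.2 y.2
          have h0 : (x : K) - (y : K) = 0 :=
            Submodule.disjoint_def.mp hcompl.disjoint _ hmem hmem2
          exact Subtype.ext (sub_eq_zero.mp h0)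
        · intro s
          obtain ⟨k, hk⟩ := hπsurj s
          obtain ⟨a, b, ha, hb, hab⟩ :=
            Submodule.codisjoint_iff_exists_add_eq.mp hcompl.codisjoint k
          refine ⟨⟨b, hb⟩, ?_⟩
          have hπa : π a = 0 := ha
          have hπb : π b = s := by
            have h2 := congrArg π hab
            rw [map_add, hπa, zero_add] at h2
            rw [h2, hk]
          simpa [hρ] using hπb
      set e := LinearEquiv.ofBijective ρ hρbij with he
      set σ : S →ₗ[MonoidAlgebra ℂ G] (Fin (n + 1) → S) :=
        (K.subtype.comp K''.subtype).comp e.symm.toLinearMap with hσ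
      have hσK : ∀ s : S, Φ (σ s) = 0 := fun s =>
        LinearMap.mem_ker.mp ((K''.subtype (e.symm s)) : K).2
      have hσlast : ∀ s : S, σ s (Fin.last n) = s := by
        intro s
        have : ρ (e.symm s) = s := e.apply_symm_apply s
        simpa [hσ, hρ, hπ] using this
      set g : Fin n → (S →ₗ[MonoidAlgebra ℂ G] S) := fun i =>
        (LinearMap.proj (Fin.castSucc i)).comp σ with hg
      choose c hc using fun i => schurScalar (g i)
      have hcs : ∀ (i : Fin n) (s : S), σ s (Fin.castSucc i) = c i • s := fun i s => hc i s
      have hzero : ∀ s : S,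
          (∑ i : Fin n, c i • f (Fin.castSucc i) (s)) + f (Fin.last n) s = 0 := by
        intro s
        have h0 := hσK s
        rw [hΦapply] at h0
        rw [Fin.sum_univ_castSucc] at h0
        calc (∑ i : Fin n, c i • f (Fin.castSucc i) s) + f (Fin.last n) s
            = (∑ i : Fin n, f (Fin.castSucc i) (σ s (Fin.castSucc i)))
              + f (Fin.last n) (σ s (Fin.last n)) := by
              rw [hσlast]
              congr 1
              refine Finset.sum_congr rfl fun i _ => ?_
              rw [hcs, LinearMap.map_smul_of_tower]
          _ = 0 := h0
      set a : Fin (n + 1) → ℂ := Fin.lastCases 1 c with ha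
      have hsum0 : ∑ i, a i • f i = 0 := by
        refine LinearMap.ext fun s => ?_
        rw [LinearMap.sum_apply, Fin.sum_univ_castSucc]
        simp only [LinearMap.smul_apply, ha, Fin.lastCases_castSucc, Fin.lastCases_last,
          one_smul, LinearMap.zero_apply]
        exact hzero s
      have := Fintype.linearIndependent_iff.mp hf a hsum0 (Fin.last n)
      rw [ha] at this
      simp at this
    -- now conclude
    have htlast : t (Fin.last n) = 0 := by
      refine hlast t ?_
      rw [hΦapply]; exact ht
    have ht' : ∑ i : Fin n, f (Fin.castSucc i) (t (Fin.castSucc i)) = 0 := by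
      have := ht
      rw [Fin.sum_univ_castSucc, htlast, map_zero, add_zero] at this
      exact this
    have hind : LinearIndependent ℂ (fun i : Fin n => f (Fin.castSucc i)) :=
      hf.comp Fin.castSucc (Fin.castSucc_injective n)
    have h0 := ih _ hind (fun i => t (Fin.castSucc i)) ht'
    funext i
    refine Fin.lastCases ?_ ?_ i
    · exact htlast
    · intro j
      exact congrFun h0 j

end Aux

/-- Let `R = MonoidAlgebra ℂ G`, `S` a simple `R`-module that is finite-dimensional over
`ℂ`, and `M` any `R`-module.  The evaluation map `S ⊗[ℂ] (S →ₗ[R] M) → M`, `s ⊗ f ↦ f s`,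
is injective and its range is the underlying `ℂ`-subspace of the `S`-isotypic component
of `M`. -/
theorem isotypicEval_injective_and_range
    (G : Type*) [Group G]
    (S : Type*) [AddCommGroup S] [Module ℂ S]
    [Module (MonoidAlgebra ℂ G) S] [IsScalarTower ℂ (MonoidAlgebra ℂ G) S]
    [IsSimpleModule (MonoidAlgebra ℂ G) S] [FiniteDimensional ℂ S]
    (M : Type*) [AddCommGroup M] [Module ℂ M]
    [Module (MonoidAlgebra ℂ G) M] [IsScalarTower ℂ (MonoidAlgebra ℂ G) M]
    [SMulCommClass (MonoidAlgebra ℂ G) ℂ M] :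
    Function.Injective (isotypicEval G S M) ∧
      LinearMap.range (isotypicEval G S M) =
        Submodule.restrictScalars ℂ
          (sSup {p : Submodule (MonoidAlgebra ℂ G) M |
            IsSimpleModule (MonoidAlgebra ℂ G) p ∧
              Nonempty (p ≃ₗ[MonoidAlgebra ℂ G] S)}) := by
  classical
  have ev_tmul : ∀ (s : S) (f : S →ₗ[MonoidAlgebra ℂ G] M),
      isotypicEval G S M (s ⊗ₜ[ℂ] f) = f s := by
    intro s f
    simp [isotypicEval]
  constructor
  · rw [← LinearMap.ker_eq_bot, eq_bot_iff]
    intro x hx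
    have hx0 : isotypicEval G S M x = 0 := LinearMap.mem_ker.mp hx
    let b := Module.Basis.ofVectorSpace ℂ (S →ₗ[MonoidAlgebra ℂ G] M)
    obtain ⟨u, rfl⟩ := TensorProduct.eq_repr_basis_right b x
    have hsum : ∑ i ∈ u.support, (b i) (u i) = 0 := by
      rw [Finsupp.sum, map_sum] at hx0
      simpa [ev_tmul] using hx0
    set n := u.support.card with hn
    let e : Fin n ≃ u.support := u.support.equivFin.symm
    have hfind : LinearIndependent ℂ (fun j : Fin n => b ((e j : u.support) : _)) := by
      refine b.linearIndependent.comp _ ?_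
      exact Subtype.val_injective.comp e.injective
    have hsum2 : ∑ j : Fin n, (b ((e j : u.support) : _)) (u ((e j : u.support) : _)) = 0 := by
      rw [Equiv.sum_comp e (fun i : u.support => (b (i : _)) (u (i : _)))]
      rw [Finset.sum_coe_sort u.support (fun i => (b i) (u i))]
      exact hsum
    have h0 := keyIndep n _ hfind (fun j => u ((e j : u.support) : _)) hsum2
    have hu : u = 0 := by
      ext i
      by_cases h : i ∈ u.support
      · have := congrFun h0 (e.symm ⟨i, h⟩)
        simpa using this
      · simpa using Finsupp.notMem_support_iff.mp h
    simp [hu]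
  · have hsup : (⨆ f : S →ₗ[MonoidAlgebra ℂ G] M, LinearMap.range f) =
        sSup {p : Submodule (MonoidAlgebra ℂ G) M |
          IsSimpleModule (MonoidAlgebra ℂ G) p ∧
            Nonempty (p ≃ₗ[MonoidAlgebra ℂ G] S)} := by
      apply le_antisymm
      · refine iSup_le fun f => ?_
        rcases eq_or_ne f 0 with rfl | hne
        · simp
        · have hinjf : Function.Injective f := LinearMap.injective_of_ne_zero hne
          refine le_sSup ?_
          refine ⟨IsSimpleModule.congr (LinearEquiv.ofInjective f hinjf).symm,
            ⟨(LinearEquiv.ofInjective f hinjf).symm⟩⟩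
      · refine sSup_le ?_
        rintro p ⟨hp, ⟨ep⟩⟩
        refine le_trans ?_ (le_iSup _ (p.subtype.comp ep.symm.toLinearMap))
        intro m hm
        exact ⟨ep ⟨m, hm⟩, by simp⟩
    rw [← hsup]
    ext m
    simp only [LinearMap.mem_range, Submodule.restrictScalars_mem]
    constructor
    · rintro ⟨x, rfl⟩
      induction x using TensorProduct.induction_on with
      | zero => simp
      | tmul s f =>
        rw [ev_tmul]
        exact Submodule.mem_iSup_of_mem f (LinearMap.mem_range_self f s)
      | add x y hx hy =>
        rw [map_add]
        exact Submodule.add_mem _ hx hy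
    · intro hm
      refine Submodule.iSup_induction _ (motive := fun m => ∃ x, isotypicEval G S M x = m) hm
        ?_ ⟨0, map_zero _⟩ ?_
      · rintro f m' ⟨s, rfl⟩
        exact ⟨s ⊗ₜ f, ev_tmul s f⟩
      · rintro x y ⟨x', rfl⟩ ⟨y', rfl⟩
        exact ⟨x' + y', map_add _ _ _⟩
end

section
/- Let G be a finite group, let d and d' be positive integers, and let ρ : G →* Matrix.unitaryGroup (Fin d) ℂ and σ : G →* Matrix.unitaryGroup (Fin d') ℂ be unitary matrix representations, each irreducible in the sense that the only subspaces of Fin d → ℂ (resp. Fin d' → ℂ) invariant under multiplication by every ρ(g) (resp. σ(g)) are 0 and the whole space. Assume ρ and σ are not isomorphic: there is no invertible matrix T : Matrix (Fin d') (Fin d) ℂ with σ(g) * T = T * ρ(g) for all g ∈ G. Then for all indices m, n ∈ Fin d and p, q ∈ Fin d', Σ_{g ∈ G} (ρ(g)) m n * conj((σ(g)) p q) = 0. (Schur orthogonality of matrix coefficients of inequivalent irreducibles, the finite-group case of the Peter–Weyl orthogonality relations.) -/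
open Matrix

/-- **Schur orthogonality (inequivalent case).** For two irreducible unitary matrix
representations `ρ`, `σ` of a finite group `G` that are not isomorphic, the matrix
coefficients are orthogonal: `Σ_g (ρ g) m n * conj((σ g) p q) = 0`. -/
theorem schur_orthogonality_inequivalent
    {G : Type*} [Group G] [Fintype G] (d d' : ℕ) (hd : 0 < d) (hd' : 0 < d')
    (ρ : G →* Matrix.unitaryGroup (Fin d) ℂ)
    (σ : G →* Matrix.unitaryGroup (Fin d') ℂ)
    (hρirr : ∀ p : Submodule ℂ (Fin d → ℂ),
      (∀ g : G, ∀ v ∈ p, (ρ g : Matrix (Fin d) (Fin d) ℂ) *ᵥ v ∈ p) → p = ⊥ ∨ p = ⊤)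
    (hσirr : ∀ p : Submodule ℂ (Fin d' → ℂ),
      (∀ g : G, ∀ v ∈ p, (σ g : Matrix (Fin d') (Fin d') ℂ) *ᵥ v ∈ p) → p = ⊥ ∨ p = ⊤)
    (hniso : ¬ ∃ T : Matrix (Fin d') (Fin d) ℂ,
      (∃ T' : Matrix (Fin d) (Fin d') ℂ, T * T' = 1 ∧ T' * T = 1) ∧
        ∀ g : G, (σ g : Matrix (Fin d') (Fin d') ℂ) * T
          = T * (ρ g : Matrix (Fin d) (Fin d) ℂ))
    (m n : Fin d) (p q : Fin d') :
    ∑ g : G, (ρ g : Matrix (Fin d) (Fin d) ℂ) m n *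
        (starRingEnd ℂ) ((σ g : Matrix (Fin d') (Fin d') ℂ) p q) = 0 := by
  classical
  -- The averaged intertwiner
  set T : Matrix (Fin d) (Fin d') ℂ :=
    ∑ g : G, (ρ g : Matrix (Fin d) (Fin d) ℂ) * Matrix.single n q (1 : ℂ) *
      (σ g⁻¹ : Matrix (Fin d') (Fin d') ℂ) with hTdef
  -- T intertwines ρ and σ
  have hint : ∀ h : G, (ρ h : Matrix (Fin d) (Fin d) ℂ) * T
      = T * (σ h : Matrix (Fin d') (Fin d') ℂ) := by
    intro h
    rw [hTdef, Matrix.mul_sum, Matrix.sum_mul]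
    refine Fintype.sum_equiv (Equiv.mulLeft h) _ _ (fun g => ?_)
    simp only [Equiv.coe_mulLeft]
    have h1 : (ρ (h * g) : Matrix (Fin d) (Fin d) ℂ)
        = (ρ h : Matrix (Fin d) (Fin d) ℂ) * (ρ g : Matrix (Fin d) (Fin d) ℂ) := by
      rw [_root_.map_mul]; rfl
    have h2 : (σ (h * g)⁻¹ : Matrix (Fin d') (Fin d') ℂ)
        * (σ h : Matrix (Fin d') (Fin d') ℂ) = (σ g⁻¹ : Matrix (Fin d') (Fin d') ℂ) := by
      have hg : (h * g)⁻¹ * h = g⁻¹ := by group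
      rw [← hg, _root_.map_mul]; rfl
    rw [h1, ← h2]
    simp only [Matrix.mul_assoc]
  -- T = 0, else we contradict non-isomorphy via Schur's lemma
  have hT0 : T = 0 := by
    by_contra hT
    apply hniso
    -- the linear map associated with T
    set f : (Fin d' → ℂ) →ₗ[ℂ] (Fin d → ℂ) := Matrix.toLin' T with hf
    have hfv : ∀ v, f v = T *ᵥ v := fun v => rfl
    have hfne : f ≠ 0 := by
      intro h0
      apply hT
      ext i j
      have h1 : f (Pi.single j 1) = 0 := by rw [h0]; rfl
      have h2 := congrFun h1 i
      simpa [hfv, Matrix.mulVec_single_one] using h2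
    -- kernel is σ-invariant, hence ⊥
    have hkerinv : ∀ g : G, ∀ v ∈ LinearMap.ker f,
        (σ g : Matrix (Fin d') (Fin d') ℂ) *ᵥ v ∈ LinearMap.ker f := by
      intro g v hv
      simp only [LinearMap.mem_ker] at hv ⊢
      rw [hfv, Matrix.mulVec_mulVec, ← hint, ← Matrix.mulVec_mulVec, ← hfv, hv,
        Matrix.mulVec_zero]
    have hker : LinearMap.ker f = ⊥ := by
      rcases hσirr (LinearMap.ker f) hkerinv with h | h
      · exact h
      · exact absurd (LinearMap.ker_eq_top.mp h) hfne
    -- range is ρ-invariant, hence ⊤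
    have hraninv : ∀ g : G, ∀ v ∈ LinearMap.range f,
        (ρ g : Matrix (Fin d) (Fin d) ℂ) *ᵥ v ∈ LinearMap.range f := by
      rintro g v ⟨w, rfl⟩
      refine ⟨(σ g : Matrix (Fin d') (Fin d') ℂ) *ᵥ w, ?_⟩
      rw [hfv, hfv, Matrix.mulVec_mulVec, Matrix.mulVec_mulVec, hint]
    have hran : LinearMap.range f = ⊤ := by
      rcases hρirr (LinearMap.range f) hraninv with h | h
      · exact absurd (LinearMap.range_eq_bot.mp h) hfne
      · exact h
    have hbij : Function.Bijective f :=
      ⟨LinearMap.ker_eq_bot.mp hker, LinearMap.range_eq_top.mp hran⟩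
    let e : (Fin d' → ℂ) ≃ₗ[ℂ] (Fin d → ℂ) := LinearEquiv.ofBijective f hbij
    set S : Matrix (Fin d') (Fin d) ℂ :=
      LinearMap.toMatrix' (e.symm : (Fin d → ℂ) →ₗ[ℂ] (Fin d' → ℂ)) with hS
    have hSlin : ∀ v, S *ᵥ v = e.symm v := fun v => by
      rw [← Matrix.toLin'_apply, hS, Matrix.toLin'_toMatrix']; rfl
    have hTS : T * S = 1 := by
      apply Matrix.toLin'.injective
      refine LinearMap.ext fun v => ?_
      rw [Matrix.toLin'_one]
      show (T * S) *ᵥ v = v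
      rw [← Matrix.mulVec_mulVec, hSlin]
      exact e.apply_symm_apply v
    have hST : S * T = 1 := by
      apply Matrix.toLin'.injective
      refine LinearMap.ext fun v => ?_
      rw [Matrix.toLin'_one]
      show (S * T) *ᵥ v = v
      rw [← Matrix.mulVec_mulVec, ← hfv, hSlin]
      exact e.symm_apply_apply v
    refine ⟨S, ⟨T, hST, hTS⟩, fun g => ?_⟩
    calc (σ g : Matrix (Fin d') (Fin d') ℂ) * S
        = (S * T) * ((σ g : Matrix (Fin d') (Fin d') ℂ) * S) := by
          rw [hST, Matrix.one_mul]
      _ = S * (T * (σ g : Matrix (Fin d') (Fin d') ℂ)) * S := by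
          simp only [Matrix.mul_assoc]
      _ = S * ((ρ g : Matrix (Fin d) (Fin d) ℂ) * T) * S := by rw [hint]
      _ = S * (ρ g : Matrix (Fin d) (Fin d) ℂ) * (T * S) := by
          simp only [Matrix.mul_assoc]
      _ = S * (ρ g : Matrix (Fin d) (Fin d) ℂ) := by rw [hTS, Matrix.mul_one]
  -- extract the (m, p) entry
  have hent : T m p = ∑ g : G, (ρ g : Matrix (Fin d) (Fin d) ℂ) m n *
      (starRingEnd ℂ) ((σ g : Matrix (Fin d') (Fin d') ℂ) p q) := by
    rw [hTdef, Matrix.sum_apply]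
    refine Finset.sum_congr rfl fun g _ => ?_
    have hstar : (σ g⁻¹ : Matrix (Fin d') (Fin d') ℂ) q p
        = (starRingEnd ℂ) ((σ g : Matrix (Fin d') (Fin d') ℂ) p q) := by
      rw [map_inv]
      rfl
    rw [← hstar]
    simp [Matrix.mul_apply, Matrix.single, ite_and, ite_mul, mul_ite, zero_mul,
      Finset.sum_ite_eq, Finset.sum_ite_eq']
  rw [← hent, hT0, Matrix.zero_apply]
end

section
/- Let G be a finite group, d a positive integer, and ρ : G →* Matrix.unitaryGroup (Fin d) ℂ a unitary matrix representation that is irreducible (the only subspaces of Fin d → ℂ invariant under multiplication by every ρ(g) are 0 and the whole space). Then for all indices m, n, p, q ∈ Fin d, (1 / |G|) * Σ_{g ∈ G} (ρ(g)) m n * conj((ρ(g)) p q) = (1 / d) * (if m = p then 1 else 0) * (if n = q then 1 else 0). (Schur orthogonality of the matrix coefficients of a single irreducible unitary representation of a finite group.) -/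
open Matrix

/-- Schur's lemma for matrices: any matrix commuting with all `ρ g` is scalar. -/
lemma schur_scalar_of_commutes {d : ℕ} (hd : 0 < d) {G : Type*} [Group G] [Fintype G]
    (ρ : G →* Matrix.unitaryGroup (Fin d) ℂ)
    (hρirr : ∀ p : Submodule ℂ (Fin d → ℂ),
      (∀ g : G, ∀ v ∈ p, (ρ g : Matrix (Fin d) (Fin d) ℂ) *ᵥ v ∈ p) → p = ⊥ ∨ p = ⊤)
    (T : Matrix (Fin d) (Fin d) ℂ)
    (hT : ∀ g : G, (ρ g : Matrix (Fin d) (Fin d) ℂ) * T = T * (ρ g : Matrix (Fin d) (Fin d) ℂ)) :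
    ∃ c : ℂ, T = c • 1 := by
  have : Nontrivial (Fin d → ℂ) := by
    have : Nonempty (Fin d) := ⟨⟨0, hd⟩⟩
    infer_instance
  obtain ⟨μ, hμ⟩ := Module.End.exists_eigenvalue (Matrix.mulVecLin T)
  set E := Module.End.eigenspace (Matrix.mulVecLin T) μ with hE
  have hinv : ∀ g : G, ∀ v ∈ E, (ρ g : Matrix (Fin d) (Fin d) ℂ) *ᵥ v ∈ E := by
    intro g v hv
    rw [Module.End.mem_eigenspace_iff] at hv ⊢
    simp only [mulVecLin_apply] at hv ⊢
    rw [mulVec_mulVec, ← hT g, ← mulVec_mulVec, hv, mulVec_smul]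
  rcases hρirr E hinv with h | h
  · exact absurd h hμ
  · refine ⟨μ, ?_⟩
    ext i j
    have := (Module.End.mem_eigenspace_iff).mp (h ▸ Submodule.mem_top : (Pi.single j 1 : Fin d → ℂ) ∈ E)
    have h2 := congrFun this i
    simp only [mulVecLin_apply, Pi.smul_apply, smul_eq_mul] at h2
    rw [Matrix.mulVec_single] at h2
    simpa [Matrix.one_apply, Pi.single_apply, mul_comm] using h2

/-- **Schur orthogonality (single irreducible).** For an irreducible unitary matrix
representation `ρ` of a finite group `G` on `Fin d → ℂ`,
`(1/|G|) Σ_g (ρ g) m n * conj((ρ g) p q) = (1/d) δ_{mp} δ_{nq}`. -/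
theorem schur_orthogonality_self
    {G : Type*} [Group G] [Fintype G] (d : ℕ) (hd : 0 < d)
    (ρ : G →* Matrix.unitaryGroup (Fin d) ℂ)
    (hρirr : ∀ p : Submodule ℂ (Fin d → ℂ),
      (∀ g : G, ∀ v ∈ p, (ρ g : Matrix (Fin d) (Fin d) ℂ) *ᵥ v ∈ p) → p = ⊥ ∨ p = ⊤)
    (m n p q : Fin d) :
    (1 / (Fintype.card G : ℂ)) *
        ∑ g : G, (ρ g : Matrix (Fin d) (Fin d) ℂ) m n *
          (starRingEnd ℂ) ((ρ g : Matrix (Fin d) (Fin d) ℂ) p q)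
      = (1 / (d : ℂ)) * (if m = p then 1 else 0) * (if n = q then 1 else 0) := by
  set X : Matrix (Fin d) (Fin d) ℂ := Matrix.single n q 1 with hX
  set T : Matrix (Fin d) (Fin d) ℂ :=
    ∑ g : G, (ρ g : Matrix (Fin d) (Fin d) ℂ) * X * (ρ g⁻¹ : Matrix (Fin d) (Fin d) ℂ) with hT
  -- coercion of inverse
  have hco : ∀ g : G, (ρ g⁻¹ : Matrix (Fin d) (Fin d) ℂ)
      = star (ρ g : Matrix (Fin d) (Fin d) ℂ) := by
    intro g; rw [map_inv]; rfl
  have hmulco : ∀ g h : G, (ρ (g * h) : Matrix (Fin d) (Fin d) ℂ)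
      = (ρ g : Matrix (Fin d) (Fin d) ℂ) * (ρ h : Matrix (Fin d) (Fin d) ℂ) := by
    intro g h; rw [_root_.map_mul]; rfl
  have hone : ∀ g : G, (ρ g⁻¹ : Matrix (Fin d) (Fin d) ℂ) * (ρ g : Matrix (Fin d) (Fin d) ℂ) = 1 := by
    intro g
    rw [← hmulco, inv_mul_cancel, _root_.map_one]; rfl
  -- T commutes with all ρ h
  have hcomm : ∀ h : G, (ρ h : Matrix (Fin d) (Fin d) ℂ) * T = T * (ρ h : Matrix (Fin d) (Fin d) ℂ) := by
    intro h
    rw [hT, Finset.mul_sum, Finset.sum_mul]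
    refine Fintype.sum_equiv (Equiv.mulLeft h) _ _ ?_
    intro g
    simp only [Equiv.coe_mulLeft]
    rw [_root_.mul_inv_rev, hmulco h g, hmulco g⁻¹ h⁻¹]
    rw [mul_assoc ((ρ h : Matrix (Fin d) (Fin d) ℂ) * (ρ g : Matrix (Fin d) (Fin d) ℂ) * X),
      mul_assoc ((ρ g⁻¹ : Matrix (Fin d) (Fin d) ℂ)), hone h, mul_one, mul_assoc, mul_assoc]
    simp only [mul_assoc]
  obtain ⟨c, hc⟩ := schur_scalar_of_commutes hd ρ hρirr T hcomm
  -- entries of T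
  have hentry : T m p = ∑ g : G, (ρ g : Matrix (Fin d) (Fin d) ℂ) m n *
      (starRingEnd ℂ) ((ρ g : Matrix (Fin d) (Fin d) ℂ) p q) := by
    rw [hT, Matrix.sum_apply]
    refine Finset.sum_congr rfl fun g _ => ?_
    have h1 : ((ρ g : Matrix (Fin d) (Fin d) ℂ) * X * (ρ g⁻¹ : Matrix (Fin d) (Fin d) ℂ)) m p
        = (ρ g : Matrix (Fin d) (Fin d) ℂ) m n * (ρ g⁻¹ : Matrix (Fin d) (Fin d) ℂ) q p := by
      simp [hX, Matrix.mul_apply, Matrix.single, ite_and, Finset.sum_ite_eq, mul_comm]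
    rw [h1, hco g]
    rfl
  -- trace of T
  have htr : c * (d : ℂ) = (Fintype.card G : ℂ) * (if n = q then 1 else 0) := by
    have h1 : Matrix.trace T = c * (d : ℂ) := by
      rw [hc]
      simp [Matrix.trace_smul, Matrix.trace_one, mul_comm]
    have h2 : Matrix.trace T = (Fintype.card G : ℂ) * (if n = q then 1 else 0) := by
      rw [hT, Matrix.trace_sum]
      have h3 : ∀ g : G, Matrix.trace ((ρ g : Matrix (Fin d) (Fin d) ℂ) * X *
          (ρ g⁻¹ : Matrix (Fin d) (Fin d) ℂ)) = if n = q then 1 else 0 := by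
        intro g
        rw [Matrix.trace_mul_cycle, hone g, Matrix.one_mul]
        rcases eq_or_ne n q with hnq | hnq
        · subst hnq; simp [hX, Matrix.trace_single_eq_same]
        · simp [hX, hnq, Matrix.trace_single_eq_of_ne _ _ _ hnq]
      rw [Finset.sum_congr rfl (fun g _ => h3 g), Finset.sum_const, Finset.card_univ]
      simp [mul_comm]
    rw [← h1, h2]
  have hcard : (Fintype.card G : ℂ) ≠ 0 := by
    exact_mod_cast Nat.cast_ne_zero.mpr Fintype.card_ne_zero
  have hdne : (d : ℂ) ≠ 0 := by
    exact_mod_cast Nat.cast_ne_zero.mpr hd.ne'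
  rw [← hentry, hc]
  have hTmp : (c • (1 : Matrix (Fin d) (Fin d) ℂ)) m p = c * (if m = p then 1 else 0) := by
    simp [Matrix.one_apply]
  rw [hTmp]
  rcases eq_or_ne m p with hmp | hmp
  · rcases eq_or_ne n q with hnq | hnq
    · simp only [hmp, hnq, if_pos rfl, if_true, eq_self_iff_true, mul_one] at htr ⊢
      field_simp
      linear_combination htr
    · rw [if_neg hnq, mul_zero] at htr
      have hc0 : c = 0 := (mul_eq_zero.mp htr).resolve_right hdne
      simp [hc0, hnq]
  · simp [hmp]
end
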